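/- If T is a bounded linear operator on a complex Hilbert space with T³ = 0, then w(T)³ = (1/4)·w(T²T* + T*T² + TT*T). -/

import Mathlib

open Complex

variable {H : Type*} [NormedAddCommGroup H] [InnerProductSpace ℂ H] [CompleteSpace H]

/-- The numerical radius `w(T) = sup {|⟨Tx,x⟩| : ‖x‖ = 1}`. -/
noncomputable def numRadius (T : H →L[ℂ] H) : ℝ :=
  sSup {r : ℝ | ∃ x : H, ‖x‖ = 1 ∧ r = ‖(inner ℂ (T x) x : ℂ)‖}

/-- The Crawford number `m(T) = inf {|⟨Tx,x⟩| : ‖x‖ = 1}`. -/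
noncomputable def crawford (T : H →L[ℂ] H) : ℝ :=
  sInf {r : ℝ | ∃ x : H, ‖x‖ = 1 ∧ r = ‖(inner ℂ (T x) x : ℂ)‖}

/-- The real part `Re(T) = (T + T*)/2`. -/
noncomputable def reOp (T : H →L[ℂ] H) : H →L[ℂ] H := (2 : ℂ)⁻¹ • (T + star T)

/-- The imaginary part `Im(T) = (T - T*)/(2i)`. -/
noncomputable def imOp (T : H →L[ℂ] H) : H →L[ℂ] H := (2 * Complex.I)⁻¹ • (T - star T)

open ContinuousLinearMap

lemma inner_unit_le_norm (T : H →L[ℂ] H) {x : H} (hx : ‖x‖ = 1) :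
    ‖(inner ℂ (T x) x : ℂ)‖ ≤ ‖T‖ := by
  calc ‖(inner ℂ (T x) x : ℂ)‖ ≤ ‖T x‖ * ‖x‖ := norm_inner_le_norm _ _
    _ ≤ (‖T‖ * ‖x‖) * ‖x‖ := by
        have := T.le_opNorm x
        nlinarith [norm_nonneg x]
    _ = ‖T‖ := by rw [hx]; ring

lemma nr_bddAbove (T : H →L[ℂ] H) :
    BddAbove {r : ℝ | ∃ x : H, ‖x‖ = 1 ∧ r = ‖(inner ℂ (T x) x : ℂ)‖} := by
  refine ⟨‖T‖, ?_⟩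
  rintro r ⟨x, hx, rfl⟩
  exact inner_unit_le_norm T hx

lemma nr_le_of_unit {T : H →L[ℂ] H} {x : H} (hx : ‖x‖ = 1) :
    ‖(inner ℂ (T x) x : ℂ)‖ ≤ numRadius T :=
  le_csSup (nr_bddAbove T) ⟨x, hx, rfl⟩

lemma nr_nonneg (T : H →L[ℂ] H) : 0 ≤ numRadius T :=
  Real.sSup_nonneg (by rintro r ⟨x, hx, rfl⟩; positivity)

lemma nr_le {T : H →L[ℂ] H} {c : ℝ} (hc : 0 ≤ c)
    (hb : ∀ x : H, ‖x‖ = 1 → ‖(inner ℂ (T x) x : ℂ)‖ ≤ c) : numRadius T ≤ c :=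
  Real.sSup_le (by rintro r ⟨x, hx, rfl⟩; exact hb x hx) hc

lemma nr_le_norm (T : H →L[ℂ] H) : numRadius T ≤ ‖T‖ :=
  nr_le (norm_nonneg T) fun _ hx => inner_unit_le_norm T hx

lemma inner_le_nr (T : H →L[ℂ] H) (x : H) :
    ‖(inner ℂ (T x) x : ℂ)‖ ≤ numRadius T * ‖x‖ ^ 2 := by
  rcases eq_or_ne x 0 with rfl | hx
  · simp
  · have hn : ‖x‖ ≠ 0 := norm_ne_zero_iff.mpr hx
    have hu : ‖((‖x‖⁻¹ : ℝ) : ℂ) • x‖ = 1 := by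
      rw [norm_smul]
      simp [hn]
    have h2 := nr_le_of_unit (T := T) hu
    have h3 : (inner ℂ (T (((‖x‖⁻¹ : ℝ) : ℂ) • x)) (((‖x‖⁻¹ : ℝ) : ℂ) • x) : ℂ)
        = ((‖x‖⁻¹ : ℝ) : ℂ) * ((‖x‖⁻¹ : ℝ) : ℂ) * inner ℂ (T x) x := by
      rw [map_smul, inner_smul_left, inner_smul_right]
      simp [Complex.conj_ofReal]
      ring
    rw [h3] at h2
    rw [norm_mul, norm_mul] at h2
    simp only [Complex.norm_real, norm_inv, Real.norm_eq_abs, abs_norm] at h2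
    have hpos : (0:ℝ) < ‖x‖ := lt_of_le_of_ne (norm_nonneg x) (Ne.symm hn)
    have : ‖x‖⁻¹ * ‖x‖⁻¹ * ‖(inner ℂ (T x) x : ℂ)‖ * ‖x‖ ^ 2 ≤ numRadius T * ‖x‖ ^ 2 := by
      nlinarith [norm_nonneg (inner ℂ (T x) x : ℂ)]
    have heq : ‖x‖⁻¹ * ‖x‖⁻¹ * ‖(inner ℂ (T x) x : ℂ)‖ * ‖x‖ ^ 2
        = ‖(inner ℂ (T x) x : ℂ)‖ := by
      have hc : ‖x‖⁻¹ * ‖x‖ = 1 := inv_mul_cancel₀ hn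
      calc ‖x‖⁻¹ * ‖x‖⁻¹ * ‖(inner ℂ (T x) x : ℂ)‖ * ‖x‖ ^ 2
          = ‖(inner ℂ (T x) x : ℂ)‖ * ((‖x‖⁻¹ * ‖x‖) * (‖x‖⁻¹ * ‖x‖)) := by ring
        _ = ‖(inner ℂ (T x) x : ℂ)‖ := by rw [hc]; ring
    linarith [this, heq.symm.le]

lemma reOp_inner (B : H →L[ℂ] H) (x : H) :
    (inner ℂ (reOp B x) x : ℂ) = ((Complex.re (inner ℂ (B x) x : ℂ) : ℝ) : ℂ) := by
  have : reOp B x = (2:ℂ)⁻¹ • (B x + (star B) x) := rfl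
  rw [this, inner_smul_left, inner_add_left]
  have hadj : (inner ℂ ((star B) x) x : ℂ) = (starRingEnd ℂ) (inner ℂ (B x) x) := by
    rw [star_eq_adjoint, adjoint_inner_left, ← inner_conj_symm]
  rw [hadj, Complex.add_conj]
  rw [map_inv₀, Complex.conj_ofNat]
  push_cast
  ring

lemma reOp_isSelfAdjoint (B : H →L[ℂ] H) : IsSelfAdjoint (reOp B) := by
  rw [IsSelfAdjoint, reOp, star_smul, star_add, star_star]
  congr 1
  · simp [Complex.star_def]
  · exact add_comm _ _

lemma norm_le_nr {A : H →L[ℂ] H} (hA : IsSelfAdjoint A) : ‖A‖ ≤ numRadius A := by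
  have hq : ∀ z : H, |Complex.re (inner ℂ (A z) z : ℂ)| ≤ numRadius A * ‖z‖ ^ 2 := fun z =>
    (Complex.abs_re_le_norm _).trans (inner_le_nr A z)
  refine opNorm_le_bound _ (nr_nonneg A) fun x => ?_
  rcases eq_or_ne (A x) 0 with h0 | h0
  · rw [h0, norm_zero]
    exact mul_nonneg (nr_nonneg A) (norm_nonneg x)
  have hx0 : x ≠ 0 := by rintro rfl; simp at h0
  have hxpos : (0:ℝ) < ‖x‖ := norm_pos_iff.mpr hx0
  have hApos : (0:ℝ) < ‖A x‖ := norm_pos_iff.mpr h0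
  set y : H := ((‖x‖ / ‖A x‖ : ℝ) : ℂ) • A x with hy
  have hyn : ‖y‖ = ‖x‖ := by
    rw [hy, norm_smul]
    rw [Complex.norm_real, Real.norm_eq_abs, _root_.abs_of_nonneg (div_nonneg hxpos.le hApos.le)]
    field_simp
  have hsym : (inner ℂ (A y) x : ℂ) = (starRingEnd ℂ) (inner ℂ (A x) y) := by
    conv_lhs => rw [← hA, star_eq_adjoint, adjoint_inner_left, ← inner_conj_symm]
  have hb : Complex.re (inner ℂ (A x) y : ℂ) = ‖x‖ * ‖A x‖ := by
    have hAx : (inner ℂ (A x) (A x) : ℂ) = ((‖A x‖ ^ 2 : ℝ) : ℂ) := by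
      rw [inner_self_eq_norm_sq_to_K]
      norm_num
    rw [hy, inner_smul_right, hAx, ← Complex.ofReal_mul, Complex.ofReal_re]
    field_simp
  have key : (4:ℝ) * Complex.re (inner ℂ (A x) y : ℂ)
      = Complex.re (inner ℂ (A (x+y)) (x+y) : ℂ) - Complex.re (inner ℂ (A (x-y)) (x-y) : ℂ) := by
    rw [map_add, map_sub, inner_add_left, inner_add_right, inner_add_right,
      inner_sub_left, inner_sub_right, inner_sub_right, hsym]
    simp only [Complex.add_re, Complex.sub_re, Complex.conj_re]
    ring
  have hpar : ‖x + y‖ ^ 2 + ‖x - y‖ ^ 2 = 2 * (‖x‖ ^ 2 + ‖y‖ ^ 2) := by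
    have := parallelogram_law_with_norm ℂ x y
    nlinarith [this]
  have hpar2 : ‖x + y‖ ^ 2 + ‖x - y‖ ^ 2 = 4 * ‖x‖ ^ 2 := by
    rw [hyn] at hpar
    linarith
  have h1 := hq (x + y)
  have h2 := hq (x - y)
  rw [abs_le] at h1 h2
  have hsum : numRadius A * ‖x + y‖ ^ 2 + numRadius A * ‖x - y‖ ^ 2
      = numRadius A * (4 * ‖x‖ ^ 2) := by
    rw [← mul_add, hpar2]
  have hmain : 4 * (‖x‖ * ‖A x‖) ≤ numRadius A * (4 * ‖x‖ ^ 2) := by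
    rw [← hb]
    linarith [key, h1.2, h2.1, hsum]
  nlinarith [hmain, hxpos]

lemma sa_nr_eq_norm {A : H →L[ℂ] H} (hA : IsSelfAdjoint A) : numRadius A = ‖A‖ :=
  le_antisymm (nr_le_norm A) (norm_le_nr hA)

lemma exists_unit_mul (c : ℂ) : ∃ z : ℂ, ‖z‖ = 1 ∧ z * c = ((‖c‖ : ℝ) : ℂ) := by
  rcases eq_or_ne c 0 with rfl | hc
  · exact ⟨1, by simp, by simp⟩
  · refine ⟨((‖c‖ : ℝ) : ℂ) / c, ?_, ?_⟩
    · rw [norm_div, Complex.norm_real, Real.norm_eq_abs, abs_norm,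
        div_self (norm_ne_zero_iff.mpr hc)]
    · field_simp

lemma exists_rot (B : H →L[ℂ] H) (x : H) :
    ∃ w : ℂ, ‖w‖ = 1 ∧ ‖(inner ℂ (B x) x : ℂ)‖ = ‖(inner ℂ (reOp (w • B) x) x : ℂ)‖ := by
  obtain ⟨z, hz, hzc⟩ := exists_unit_mul (inner ℂ (B x) x : ℂ)
  refine ⟨(starRingEnd ℂ) z, by simpa using hz, ?_⟩
  rw [reOp_inner]
  have h1 : (inner ℂ (((starRingEnd ℂ) z • B) x) x : ℂ) = z * inner ℂ (B x) x := by
    have : ((starRingEnd ℂ) z • B) x = (starRingEnd ℂ) z • B x := rfl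
    rw [this, inner_smul_left]
    simp
  rw [h1, hzc]
  simp

lemma nr_reOp_le (B : H →L[ℂ] H) {z : ℂ} (hz : ‖z‖ = 1) :
    numRadius (reOp (z • B)) ≤ numRadius B := by
  refine nr_le (nr_nonneg B) fun x hx => ?_
  rw [reOp_inner]
  have h1 : (inner ℂ ((z • B) x) x : ℂ) = (starRingEnd ℂ) z * inner ℂ (B x) x := by
    have : (z • B) x = z • B x := rfl
    rw [this, inner_smul_left]
  have h2 : ‖((Complex.re (inner ℂ ((z • B) x) x : ℂ) : ℝ) : ℂ)‖
      ≤ ‖(inner ℂ ((z • B) x) x : ℂ)‖ := by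
    rw [Complex.norm_real]
    exact Complex.abs_re_le_norm _
  refine h2.trans ?_
  rw [h1, norm_mul]
  simp only [RCLike.norm_conj, hz, one_mul]
  exact nr_le_of_unit hx

lemma sa_norm_pow3 {A : H →L[ℂ] H} (hA : IsSelfAdjoint A) : ‖A ^ 3‖ = ‖A‖ ^ 3 := by
  rcases eq_or_ne A 0 with rfl | hA0
  · simp [zero_pow]
  have hApos : (0:ℝ) < ‖A‖ := norm_pos_iff.mpr hA0
  have h2 : ‖A ^ 2‖ = ‖A‖ ^ 2 := by
    have := hA.nnnorm_pow_two_pow 1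
    have h' := congrArg (fun t : NNReal => (t : ℝ)) this
    simpa using h'
  have h4 : ‖A ^ 4‖ = ‖A‖ ^ 4 := by
    have := hA.nnnorm_pow_two_pow 2
    have h' := congrArg (fun t : NNReal => (t : ℝ)) this
    simpa using h'
  have hle : ‖A ^ 3‖ ≤ ‖A‖ ^ 3 := norm_pow_le' A (by norm_num)
  have h43 : A ^ 4 = A ^ 3 * A := by rw [pow_succ]
  have hge : ‖A‖ ^ 4 ≤ ‖A ^ 3‖ * ‖A‖ := by
    rw [← h4, h43]
    exact norm_mul_le _ _
  have : ‖A‖ ^ 3 ≤ ‖A ^ 3‖ := by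
    have := mul_le_mul_of_nonneg_right hge (le_of_lt (inv_pos.mpr hApos))
    calc ‖A‖ ^ 3 = ‖A‖ ^ 4 * ‖A‖⁻¹ := by field_simp
      _ ≤ (‖A ^ 3‖ * ‖A‖) * ‖A‖⁻¹ := this
      _ = ‖A ^ 3‖ := by field_simp
  linarith

lemma cube_reOp (T : H →L[ℂ] H) (h3 : T * (T * T) = 0) {z : ℂ}
    (hz1 : z * (starRingEnd ℂ) z = 1) :
    reOp (z • T) ^ 3
      = (4:ℂ)⁻¹ • reOp (z • (T ^ 2 * star T + star T * T ^ 2 + T * star T * T)) := by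
  have hs3 : star T * (star T * star T) = 0 := by
    have := congrArg star h3
    simpa [mul_assoc] using this
  simp only [reOp, star_smul, star_add, star_star, Complex.star_def, pow_succ, pow_zero, one_mul,
    star_mul, star_star]
  simp only [smul_add, smul_smul, mul_add, add_mul, smul_mul_assoc, mul_smul_comm, mul_assoc,
    h3, hs3, smul_zero, mul_zero, zero_add, add_zero]
  match_scalars <;>
    first
      | linear_combination ((8:ℂ)⁻¹ * z) * hz1
      | linear_combination ((8:ℂ)⁻¹ * (starRingEnd ℂ) z) * hz1
      | linear_combination (0:ℂ) * hz1

theorem stmt3 (T : H →L[ℂ] H) (h : T ^ 3 = 0) :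
    numRadius T ^ 3
      = (1/4) * numRadius (T ^ 2 * star T + star T * T ^ 2 + T * star T * T) := by
  set S : H →L[ℂ] H := T ^ 2 * star T + star T * T ^ 2 + T * star T * T with hSdef
  have h3 : T * (T * T) = 0 := by
    have he : T ^ 3 = T * (T * T) := by
      rw [pow_succ, pow_succ, pow_one, mul_assoc]
    rwa [he] at h
  have hzmul : ∀ w : ℂ, ‖w‖ = 1 → w * (starRingEnd ℂ) w = 1 := by
    intro w hw
    rw [Complex.mul_conj]
    norm_cast
    simp [Complex.normSq_eq_norm_sq, hw]
  have claim : ∀ w : ℂ, ‖w‖ = 1 → ‖reOp (w • T)‖ ^ 3 = (1/4) * ‖reOp (w • S)‖ := by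
    intro w hw
    rw [← sa_norm_pow3 (reOp_isSelfAdjoint (w • T)), cube_reOp T h3 (hzmul w hw), norm_smul,
      norm_inv]
    rw [← hSdef]
    norm_num [Complex.norm_ofNat]
  have hwT := nr_nonneg T
  have hwS := nr_nonneg S
  have dir1 : numRadius S ≤ 4 * numRadius T ^ 3 := by
    refine nr_le (by positivity) fun x hx => ?_
    obtain ⟨w, hw, hwe⟩ := exists_rot S x
    rw [hwe]
    have step1 : ‖(inner ℂ (reOp (w • S) x) x : ℂ)‖ ≤ ‖reOp (w • S)‖ := inner_unit_le_norm _ hx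
    have step2 : ‖reOp (w • S)‖ = 4 * ‖reOp (w • T)‖ ^ 3 := by
      have := claim w hw
      linarith
    have step3 : ‖reOp (w • T)‖ ≤ numRadius T := by
      rw [← sa_nr_eq_norm (reOp_isSelfAdjoint _)]
      exact nr_reOp_le T hw
    have step4 : ‖reOp (w • T)‖ ^ 3 ≤ numRadius T ^ 3 :=
      pow_le_pow_left₀ (norm_nonneg _) step3 3
    linarith
  set b : ℝ := (1/4) * numRadius S with hbdef
  have hbnn : 0 ≤ b := by positivity
  set c : ℝ := b ^ ((3:ℝ)⁻¹) with hcdef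
  have hcnn : 0 ≤ c := Real.rpow_nonneg hbnn _
  have hc3 : c ^ 3 = b := by
    rw [hcdef, ← Real.rpow_natCast (b ^ ((3:ℝ)⁻¹)) 3, ← Real.rpow_mul hbnn]
    norm_num
  have dir2 : numRadius T ≤ c := by
    refine nr_le hcnn fun x hx => ?_
    obtain ⟨w, hw, hwe⟩ := exists_rot T x
    have step1 : ‖(inner ℂ (T x) x : ℂ)‖ ≤ ‖reOp (w • T)‖ := by
      rw [hwe]
      exact inner_unit_le_norm _ hx
    have step3 : ‖reOp (w • S)‖ ≤ numRadius S := by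
      rw [← sa_nr_eq_norm (reOp_isSelfAdjoint _)]
      exact nr_reOp_le S hw
    have hcube : ‖(inner ℂ (T x) x : ℂ)‖ ^ 3 ≤ c ^ 3 := by
      rw [hc3]
      calc ‖(inner ℂ (T x) x : ℂ)‖ ^ 3 ≤ ‖reOp (w • T)‖ ^ 3 :=
            pow_le_pow_left₀ (norm_nonneg _) step1 3
        _ = (1/4) * ‖reOp (w • S)‖ := claim w hw
        _ ≤ b := by rw [hbdef]; linarith
    exact le_of_pow_le_pow_left₀ (by norm_num) hcnn hcube
  have dir2' : numRadius T ^ 3 ≤ b := by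
    calc numRadius T ^ 3 ≤ c ^ 3 := pow_le_pow_left₀ hwT dir2 3
      _ = b := hc3
  have hge : b ≤ numRadius T ^ 3 := by
    rw [hbdef]
    linarith
  linarith [dir2', hge]
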